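/- Let q ≥ 2 be an integer, let s, t ∈ ℂ with s ≠ 0, and let f = (x² + y³)² + s·x·y^{q+4} + t·x·y^{q+5} ∈ ℂ[x,y]. Then: (i) there exist polynomials α, β, u ∈ ℂ[x,y] with u(0,0) ≠ 0 such that u·y^{q+7} = α·(∂f/∂x) + β·(∂f/∂y); and (ii) there exist polynomials α', β', u' ∈ ℂ[x,y] with u'(0,0) ≠ 0 such that u'·x^{q+4} = α'·(∂f/∂x) + β'·(∂f/∂y). In particular, y^{q+7} and x^{q+4} belong to the Jacobian ideal of f in the local ring ℂ[x,y] localized at the maximal ideal (x,y). -/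
import Mathlib

open MvPolynomial

set_option maxHeartbeats 2000000

/-- The polynomial `f = (x² + y³)² + s x y^{q+4} + t x y^{q+5}` (family `W^#_{1,2q-1}`),
with `x = X 0`, `y = X 1`. -/
noncomputable def fWsharpOdd (q : ℕ) (s t : ℂ) : MvPolynomial (Fin 2) ℂ :=
  (X 0 ^ 2 + X 1 ^ 3) ^ 2 + C s * X 0 * X 1 ^ (q + 4) + C t * X 0 * X 1 ^ (q + 5)

private lemma wsharp_hF (Q : ℕ) (s t : ℂ) :
    pderiv 0 (fWsharpOdd (Q+2) s t) =
      4 * X 0 ^ 3 + 4 * X 0 * X 1 ^ 3 + (C s + C t * X 1) * (X 1 ^ Q * X 1 ^ 6) := by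
  have h10 : (1 : Fin 2) ≠ 0 := by decide
  simp only [fWsharpOdd, map_add, pderiv_mul, pderiv_pow, pderiv_X_self, pderiv_X_of_ne h10,
    pderiv_C]
  ring

private lemma wsharp_hG (Q : ℕ) (s t : ℂ) :
    pderiv 1 (fWsharpOdd (Q+2) s t) =
      6 * X 0 ^ 2 * X 1 ^ 2 + 6 * X 1 ^ 5 + (((Q : MvPolynomial (Fin 2) ℂ) + 6) * C s + ((Q : MvPolynomial (Fin 2) ℂ) + 7) * C t * X 1) * (X 0 * (X 1 ^ Q * X 1 ^ 5)) := by
  have h01 : (0 : Fin 2) ≠ 1 := by decide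
  simp only [fWsharpOdd, map_add, pderiv_mul, pderiv_pow, pderiv_X_self, pderiv_X_of_ne h01,
    pderiv_C]
  push_cast
  ring

private lemma wsharp_mem (Q : ℕ) (s t : ℂ) (hs : s ≠ 0) (a : ℕ) :
    ∀ b : ℕ, 2*Q + 18 ≤ 3*a + 2*b →
    ∃ u α β : MvPolynomial (Fin 2) ℂ, MvPolynomial.coeff 0 u ≠ 0 ∧
      u * (X 0 ^ a * X 1 ^ b) =
        α * pderiv 0 (fWsharpOdd (Q+2) s t) + β * pderiv 1 (fWsharpOdd (Q+2) s t) := by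
  induction a using Nat.strong_induction_on with
  | _ a IH =>
  intro b hb
  have hF := wsharp_hF Q s t
  have hG := wsharp_hG Q s t
  set F := pderiv 0 (fWsharpOdd (Q+2) s t) with hFdef
  set G := pderiv 1 (fWsharpOdd (Q+2) s t) with hGdef
  have hQ6 : ((Q:ℂ) + 6) ≠ 0 := by
    have : ((Q + 6 : ℕ) : ℂ) ≠ 0 := Nat.cast_ne_zero.mpr (by omega)
    push_cast at this; exact this
  have hQ15 : (2*(Q:ℂ) + 15) ≠ 0 := by
    have : ((2*Q + 15 : ℕ) : ℂ) ≠ 0 := Nat.cast_ne_zero.mpr (by omega)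
    push_cast at this; exact this
  -- T1 identity
  have I_T1 : (3*((2*(Q : MvPolynomial (Fin 2) ℂ) + 15) * C s + (2*(Q : MvPolynomial (Fin 2) ℂ) + 17) * C t * X 1) + (((Q : MvPolynomial (Fin 2) ℂ) + 6) * C s + ((Q : MvPolynomial (Fin 2) ℂ) + 7) * C t * X 1)^2 * X 0 * X 1^Q) * (X 1^Q * X 1^9)
      = (9 * X 1^3) * F + ((((Q : MvPolynomial (Fin 2) ℂ) + 6) * C s + ((Q : MvPolynomial (Fin 2) ℂ) + 7) * C t * X 1) * (X 1^Q * X 1^4) - 6 * X 0 * X 1) * G := by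
    rw [hF, hG]; ring
  have hu1 : MvPolynomial.coeff 0 (3*((2*(Q : MvPolynomial (Fin 2) ℂ) + 15) * C s + (2*(Q : MvPolynomial (Fin 2) ℂ) + 17) * C t * X 1) + (((Q : MvPolynomial (Fin 2) ℂ) + 6) * C s + ((Q : MvPolynomial (Fin 2) ℂ) + 7) * C t * X 1)^2 * X 0 * X 1^Q) = 3*((2*(Q:ℂ)+15)*s) := by
    simp only [show ∀ p : MvPolynomial (Fin 2) ℂ, MvPolynomial.coeff 0 p = constantCoeff p from fun p => rfl]
    simp [map_ofNat]
  have hu1ne : MvPolynomial.coeff 0 (3*((2*(Q : MvPolynomial (Fin 2) ℂ) + 15) * C s + (2*(Q : MvPolynomial (Fin 2) ℂ) + 17) * C t * X 1) + (((Q : MvPolynomial (Fin 2) ℂ) + 6) * C s + ((Q : MvPolynomial (Fin 2) ℂ) + 7) * C t * X 1)^2 * X 0 * X 1^Q) ≠ 0 := by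
    rw [hu1]
    exact mul_ne_zero (by norm_num) (mul_ne_zero hQ15 hs)
  -- M1 identity
  have I_M1 : 3 * X 1^2 * F - 2 * X 0 * G
      = 3*(C s + C t * X 1)*(X 1^Q * X 1^8) - 2*(((Q : MvPolynomial (Fin 2) ℂ) + 6) * C s + ((Q : MvPolynomial (Fin 2) ℂ) + 7) * C t * X 1)*(X 0^2*(X 1^Q * X 1^5)) := by
    rw [hF, hG]; ring
  -- N1 identity
  have I_N1 : (((Q : MvPolynomial (Fin 2) ℂ) + 6) * C s + ((Q : MvPolynomial (Fin 2) ℂ) + 7) * C t * X 1) * X 0 * F - (C s + C t * X 1) * X 1 * G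
      = 4*(((Q : MvPolynomial (Fin 2) ℂ) + 6) * C s + ((Q : MvPolynomial (Fin 2) ℂ) + 7) * C t * X 1)*X 0^4 + (4*(((Q : MvPolynomial (Fin 2) ℂ) + 6) * C s + ((Q : MvPolynomial (Fin 2) ℂ) + 7) * C t * X 1) - 6*(C s + C t * X 1))*(X 0^2*X 1^3) - 6*(C s + C t * X 1)*X 1^6 := by
    rw [hF, hG]; ring
  match a, hb with
  | 0, hb =>
    obtain ⟨r, rfl⟩ : ∃ r, b = Q + 9 + r := ⟨b - (Q+9), by omega⟩
    exact ⟨(3*((2*(Q : MvPolynomial (Fin 2) ℂ) + 15) * C s + (2*(Q : MvPolynomial (Fin 2) ℂ) + 17) * C t * X 1) + (((Q : MvPolynomial (Fin 2) ℂ) + 6) * C s + ((Q : MvPolynomial (Fin 2) ℂ) + 7) * C t * X 1)^2 * X 0 * X 1^Q), (9 * X 1^3) * X 1^r,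
      ((((Q : MvPolynomial (Fin 2) ℂ) + 6) * C s + ((Q : MvPolynomial (Fin 2) ℂ) + 7) * C t * X 1) * (X 1^Q * X 1^4) - 6 * X 0 * X 1) * X 1^r, hu1ne,
      by linear_combination (X 1^r) * I_T1⟩
  | 1, hb =>
    -- T2 identity and composite certificate
    have I_T2 : (2*((2*(Q : MvPolynomial (Fin 2) ℂ) + 15) * C s + (2*(Q : MvPolynomial (Fin 2) ℂ) + 17) * C t * X 1))*(X 0*(X 1^Q * X 1^8)) + ((((Q : MvPolynomial (Fin 2) ℂ) + 6) * C s + ((Q : MvPolynomial (Fin 2) ℂ) + 7) * C t * X 1)*(C s + C t * X 1))*(X 1^Q * X 1^Q * X 1^11)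
        = (6*X 0*X 1^2 + (((Q : MvPolynomial (Fin 2) ℂ) + 6) * C s + ((Q : MvPolynomial (Fin 2) ℂ) + 7) * C t * X 1)*(X 1^Q * X 1^5)) * F - (4*X 0^2) * G := by
      rw [hF, hG]; ring
    have I_T2' : (2*((2*(Q : MvPolynomial (Fin 2) ℂ) + 15) * C s + (2*(Q : MvPolynomial (Fin 2) ℂ) + 17) * C t * X 1)*(3*((2*(Q : MvPolynomial (Fin 2) ℂ) + 15) * C s + (2*(Q : MvPolynomial (Fin 2) ℂ) + 17) * C t * X 1) + (((Q : MvPolynomial (Fin 2) ℂ) + 6) * C s + ((Q : MvPolynomial (Fin 2) ℂ) + 7) * C t * X 1)^2 * X 0 * X 1^Q)) * (X 0*(X 1^Q * X 1^8))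
        = ((3*((2*(Q : MvPolynomial (Fin 2) ℂ) + 15) * C s + (2*(Q : MvPolynomial (Fin 2) ℂ) + 17) * C t * X 1) + (((Q : MvPolynomial (Fin 2) ℂ) + 6) * C s + ((Q : MvPolynomial (Fin 2) ℂ) + 7) * C t * X 1)^2 * X 0 * X 1^Q)*(6*X 0*X 1^2 + (((Q : MvPolynomial (Fin 2) ℂ) + 6) * C s + ((Q : MvPolynomial (Fin 2) ℂ) + 7) * C t * X 1)*(X 1^Q * X 1^5)) - (((Q : MvPolynomial (Fin 2) ℂ) + 6) * C s + ((Q : MvPolynomial (Fin 2) ℂ) + 7) * C t * X 1)*(C s + C t * X 1)*X 1^Q*X 1^2*(9*X 1^3)) * F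
          + (-((3*((2*(Q : MvPolynomial (Fin 2) ℂ) + 15) * C s + (2*(Q : MvPolynomial (Fin 2) ℂ) + 17) * C t * X 1) + (((Q : MvPolynomial (Fin 2) ℂ) + 6) * C s + ((Q : MvPolynomial (Fin 2) ℂ) + 7) * C t * X 1)^2 * X 0 * X 1^Q)*(4*X 0^2)) - (((Q : MvPolynomial (Fin 2) ℂ) + 6) * C s + ((Q : MvPolynomial (Fin 2) ℂ) + 7) * C t * X 1)*(C s + C t * X 1)*X 1^Q*X 1^2*((((Q : MvPolynomial (Fin 2) ℂ) + 6) * C s + ((Q : MvPolynomial (Fin 2) ℂ) + 7) * C t * X 1)*(X 1^Q*X 1^4) - 6*X 0*X 1)) * G := by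
      linear_combination (3*((2*(Q : MvPolynomial (Fin 2) ℂ) + 15) * C s + (2*(Q : MvPolynomial (Fin 2) ℂ) + 17) * C t * X 1) + (((Q : MvPolynomial (Fin 2) ℂ) + 6) * C s + ((Q : MvPolynomial (Fin 2) ℂ) + 7) * C t * X 1)^2 * X 0 * X 1^Q) * I_T2 - (((Q : MvPolynomial (Fin 2) ℂ) + 6) * C s + ((Q : MvPolynomial (Fin 2) ℂ) + 7) * C t * X 1)*(C s + C t * X 1)*X 1^Q*X 1^2 * I_T1
    have hu2ne : MvPolynomial.coeff 0 (2*((2*(Q : MvPolynomial (Fin 2) ℂ) + 15) * C s + (2*(Q : MvPolynomial (Fin 2) ℂ) + 17) * C t * X 1)*(3*((2*(Q : MvPolynomial (Fin 2) ℂ) + 15) * C s + (2*(Q : MvPolynomial (Fin 2) ℂ) + 17) * C t * X 1) + (((Q : MvPolynomial (Fin 2) ℂ) + 6) * C s + ((Q : MvPolynomial (Fin 2) ℂ) + 7) * C t * X 1)^2 * X 0 * X 1^Q)) ≠ 0 := by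
      have : MvPolynomial.coeff 0 (2*((2*(Q : MvPolynomial (Fin 2) ℂ) + 15) * C s + (2*(Q : MvPolynomial (Fin 2) ℂ) + 17) * C t * X 1)*(3*((2*(Q : MvPolynomial (Fin 2) ℂ) + 15) * C s + (2*(Q : MvPolynomial (Fin 2) ℂ) + 17) * C t * X 1) + (((Q : MvPolynomial (Fin 2) ℂ) + 6) * C s + ((Q : MvPolynomial (Fin 2) ℂ) + 7) * C t * X 1)^2 * X 0 * X 1^Q))
          = (2*((2*(Q:ℂ)+15)*s)) * MvPolynomial.coeff 0 (3*((2*(Q : MvPolynomial (Fin 2) ℂ) + 15) * C s + (2*(Q : MvPolynomial (Fin 2) ℂ) + 17) * C t * X 1) + (((Q : MvPolynomial (Fin 2) ℂ) + 6) * C s + ((Q : MvPolynomial (Fin 2) ℂ) + 7) * C t * X 1)^2 * X 0 * X 1^Q) := by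
        simp only [show ∀ p : MvPolynomial (Fin 2) ℂ, MvPolynomial.coeff 0 p = constantCoeff p from fun p => rfl]
        simp only [map_mul, map_add, map_pow, map_natCast, map_ofNat, constantCoeff_C,
          constantCoeff_X, mul_zero, zero_mul, add_zero, zero_add]
      rw [this, hu1]
      exact mul_ne_zero (mul_ne_zero two_ne_zero (mul_ne_zero hQ15 hs))
        (mul_ne_zero (by norm_num) (mul_ne_zero hQ15 hs))
    obtain ⟨r, rfl⟩ : ∃ r, b = Q + 8 + r := ⟨b - (Q+8), by omega⟩
    refine ⟨2*((2*(Q : MvPolynomial (Fin 2) ℂ) + 15) * C s + (2*(Q : MvPolynomial (Fin 2) ℂ) + 17) * C t * X 1)*(3*((2*(Q : MvPolynomial (Fin 2) ℂ) + 15) * C s + (2*(Q : MvPolynomial (Fin 2) ℂ) + 17) * C t * X 1) + (((Q : MvPolynomial (Fin 2) ℂ) + 6) * C s + ((Q : MvPolynomial (Fin 2) ℂ) + 7) * C t * X 1)^2 * X 0 * X 1^Q),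
      ((3*((2*(Q : MvPolynomial (Fin 2) ℂ) + 15) * C s + (2*(Q : MvPolynomial (Fin 2) ℂ) + 17) * C t * X 1) + (((Q : MvPolynomial (Fin 2) ℂ) + 6) * C s + ((Q : MvPolynomial (Fin 2) ℂ) + 7) * C t * X 1)^2 * X 0 * X 1^Q)*(6*X 0*X 1^2 + (((Q : MvPolynomial (Fin 2) ℂ) + 6) * C s + ((Q : MvPolynomial (Fin 2) ℂ) + 7) * C t * X 1)*(X 1^Q * X 1^5)) - (((Q : MvPolynomial (Fin 2) ℂ) + 6) * C s + ((Q : MvPolynomial (Fin 2) ℂ) + 7) * C t * X 1)*(C s + C t * X 1)*X 1^Q*X 1^2*(9*X 1^3)) * X 1^r,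
      ((-((3*((2*(Q : MvPolynomial (Fin 2) ℂ) + 15) * C s + (2*(Q : MvPolynomial (Fin 2) ℂ) + 17) * C t * X 1) + (((Q : MvPolynomial (Fin 2) ℂ) + 6) * C s + ((Q : MvPolynomial (Fin 2) ℂ) + 7) * C t * X 1)^2 * X 0 * X 1^Q)*(4*X 0^2)) - (((Q : MvPolynomial (Fin 2) ℂ) + 6) * C s + ((Q : MvPolynomial (Fin 2) ℂ) + 7) * C t * X 1)*(C s + C t * X 1)*X 1^Q*X 1^2*((((Q : MvPolynomial (Fin 2) ℂ) + 6) * C s + ((Q : MvPolynomial (Fin 2) ℂ) + 7) * C t * X 1)*(X 1^Q*X 1^4) - 6*X 0*X 1))) * X 1^r,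
      hu2ne, by linear_combination (X 1^r) * I_T2'⟩
  | 2, hb =>
    obtain ⟨u, α, β, hu, h⟩ := IH 0 (by omega) (b+3) (by omega)
    obtain ⟨r, rfl⟩ : ∃ r, b = Q + 5 + r := ⟨b - (Q+5), by omega⟩
    refine ⟨2*(((Q : MvPolynomial (Fin 2) ℂ) + 6) * C s + ((Q : MvPolynomial (Fin 2) ℂ) + 7) * C t * X 1)*u, 3*(C s + C t * X 1)*α - 3*u*X 0^0*X 1^(r+2), 3*(C s + C t * X 1)*β + 2*u*X 0^(0+1)*X 1^r, ?_, ?_⟩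
    · have : MvPolynomial.coeff 0 (2*(((Q : MvPolynomial (Fin 2) ℂ) + 6) * C s + ((Q : MvPolynomial (Fin 2) ℂ) + 7) * C t * X 1)*u)
          = (2*(((Q:ℂ)+6)*s)) * MvPolynomial.coeff 0 u := by
        simp only [show ∀ p : MvPolynomial (Fin 2) ℂ, MvPolynomial.coeff 0 p = constantCoeff p from fun p => rfl]
        simp only [map_mul, map_add, map_pow, map_natCast, map_ofNat, constantCoeff_C,
          constantCoeff_X, mul_zero, zero_mul, add_zero, zero_add]
      rw [this]
      exact mul_ne_zero (mul_ne_zero two_ne_zero (mul_ne_zero hQ6 hs)) hu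
    · linear_combination (3*(C s + C t * X 1)) * h + (u*X 0^0*X 1^r) * I_M1
  | 3, hb =>
    obtain ⟨u, α, β, hu, h⟩ := IH 1 (by omega) (b+3) (by omega)
    obtain ⟨r, rfl⟩ : ∃ r, b = Q + 5 + r := ⟨b - (Q+5), by omega⟩
    refine ⟨2*(((Q : MvPolynomial (Fin 2) ℂ) + 6) * C s + ((Q : MvPolynomial (Fin 2) ℂ) + 7) * C t * X 1)*u, 3*(C s + C t * X 1)*α - 3*u*X 0^1*X 1^(r+2), 3*(C s + C t * X 1)*β + 2*u*X 0^(1+1)*X 1^r, ?_, ?_⟩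
    · have : MvPolynomial.coeff 0 (2*(((Q : MvPolynomial (Fin 2) ℂ) + 6) * C s + ((Q : MvPolynomial (Fin 2) ℂ) + 7) * C t * X 1)*u)
          = (2*(((Q:ℂ)+6)*s)) * MvPolynomial.coeff 0 u := by
        simp only [show ∀ p : MvPolynomial (Fin 2) ℂ, MvPolynomial.coeff 0 p = constantCoeff p from fun p => rfl]
        simp only [map_mul, map_add, map_pow, map_natCast, map_ofNat, constantCoeff_C,
          constantCoeff_X, mul_zero, zero_mul, add_zero, zero_add]
      rw [this]
      exact mul_ne_zero (mul_ne_zero two_ne_zero (mul_ne_zero hQ6 hs)) hu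
    · linear_combination (3*(C s + C t * X 1)) * h + (u*X 0^1*X 1^r) * I_M1
  | (a+4), hb =>
    obtain ⟨u1, α1, β1, hv1, h1⟩ := IH a (by omega) (b+6) (by omega)
    obtain ⟨u2, α2, β2, hv2, h2⟩ := IH (a+2) (by omega) (b+3) (by omega)
    refine ⟨4*(((Q : MvPolynomial (Fin 2) ℂ) + 6) * C s + ((Q : MvPolynomial (Fin 2) ℂ) + 7) * C t * X 1)*u1*u2,
      (((Q : MvPolynomial (Fin 2) ℂ) + 6) * C s + ((Q : MvPolynomial (Fin 2) ℂ) + 7) * C t * X 1)*u1*u2*X 0^(a+1)*X 1^b - (4*(((Q : MvPolynomial (Fin 2) ℂ) + 6) * C s + ((Q : MvPolynomial (Fin 2) ℂ) + 7) * C t * X 1)-6*(C s + C t * X 1))*u1*α2 + 6*(C s + C t * X 1)*u2*α1,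
      -((C s + C t * X 1)*u1*u2*X 0^a*X 1^(b+1)) - (4*(((Q : MvPolynomial (Fin 2) ℂ) + 6) * C s + ((Q : MvPolynomial (Fin 2) ℂ) + 7) * C t * X 1)-6*(C s + C t * X 1))*u1*β2 + 6*(C s + C t * X 1)*u2*β1, ?_, ?_⟩
    · have : MvPolynomial.coeff 0 (4*(((Q : MvPolynomial (Fin 2) ℂ) + 6) * C s + ((Q : MvPolynomial (Fin 2) ℂ) + 7) * C t * X 1)*u1*u2)
          = (4*(((Q:ℂ)+6)*s)) * MvPolynomial.coeff 0 u1 * MvPolynomial.coeff 0 u2 := by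
        simp only [show ∀ p : MvPolynomial (Fin 2) ℂ, MvPolynomial.coeff 0 p = constantCoeff p from fun p => rfl]
        simp only [map_mul, map_add, map_pow, map_natCast, map_ofNat, constantCoeff_C,
          constantCoeff_X, mul_zero, zero_mul, add_zero, zero_add]
      rw [this]
      exact mul_ne_zero (mul_ne_zero (mul_ne_zero (by norm_num) (mul_ne_zero hQ6 hs)) hv1) hv2
    · linear_combination (-(u1*u2*X 0^a*X 1^b)) * I_N1 - (4*(((Q : MvPolynomial (Fin 2) ℂ) + 6) * C s + ((Q : MvPolynomial (Fin 2) ℂ) + 7) * C t * X 1)-6*(C s + C t * X 1))*u1 * h2 + 6*(C s + C t * X 1)*u2 * h1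

/-- For `f = (x² + y³)² + s x y^{q+4} + t x y^{q+5}` with `q ≥ 2` and `s ≠ 0`, there are
units `u, u'` (polynomials with nonzero constant term) and polynomials `α, β, α', β'`
with `u·y^{q+7} = α·f_x + β·f_y` and `u'·x^{q+4} = α'·f_x + β'·f_y`; in particular
`y^{q+7}` and `x^{q+4}` lie in the Jacobian ideal of `f` in the local ring at `0`. -/
theorem y_and_x_powers_in_jacobian_WsharpOdd (q : ℕ) (hq : 2 ≤ q) (s t : ℂ)
    (hs : s ≠ 0) :
    (∃ α β u : MvPolynomial (Fin 2) ℂ, MvPolynomial.coeff 0 u ≠ 0 ∧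
      u * X 1 ^ (q + 7) =
        α * pderiv 0 (fWsharpOdd q s t) + β * pderiv 1 (fWsharpOdd q s t)) ∧
    (∃ α' β' u' : MvPolynomial (Fin 2) ℂ, MvPolynomial.coeff 0 u' ≠ 0 ∧
      u' * X 0 ^ (q + 4) =
        α' * pderiv 0 (fWsharpOdd q s t) + β' * pderiv 1 (fWsharpOdd q s t)) := by
  obtain ⟨Q, rfl⟩ : ∃ Q, q = Q + 2 := ⟨q - 2, by omega⟩
  constructor
  · obtain ⟨u, α, β, hu, h⟩ := wsharp_mem Q s t hs 0 (Q + 9) (by omega)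
    exact ⟨α, β, u, hu, by rw [show Q + 2 + 7 = Q + 9 by omega]; linear_combination h⟩
  · obtain ⟨u, α, β, hu, h⟩ := wsharp_mem Q s t hs (Q + 6) 0 (by omega)
    exact ⟨α, β, u, hu, by rw [show Q + 2 + 4 = Q + 6 by omega]; linear_combination h⟩
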